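/- For all positive integers r and κ, the finite sum ∑_{l=0}^{⌊r/2⌋} ∏_{j=0}^{l-1} [(r-2j)(r-2j-1)] / [(2j+2)(2κ+2j+1)] equals 2^r · binom(r+κ-1, r) / binom(r+2κ-1, r), where the empty product corresponding to l = 0 has value one. -/

import Mathlib

noncomputable def monT (κ r l : ℕ) : ℚ :=
  ∏ j ∈ Finset.range l,
    (((r : ℚ) - 2 * j) * ((r : ℚ) - 2 * j - 1)) /
      ((2 * (j : ℚ) + 2) * (2 * (κ : ℚ) + 2 * j + 1))

lemma monT_zero (κ r l : ℕ) (h : r / 2 < l) : monT κ r l = 0 := by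
  apply Finset.prod_eq_zero (i := r / 2) (Finset.mem_range.2 h)
  have : ((r : ℚ) - 2 * (r / 2 : ℕ)) * ((r : ℚ) - 2 * (r / 2 : ℕ) - 1) = 0 := by
    rcases Nat.even_or_odd r with ⟨m, hm⟩ | ⟨m, hm⟩
    · have h1 : r / 2 = m := by omega
      subst hm; rw [h1]; push_cast; ring
    · have h1 : r / 2 = m := by omega
      subst hm; rw [h1]; push_cast; ring
  rw [this, zero_div]

lemma monT_rel (κ r l : ℕ) :
    ((r : ℚ) + 1) * monT κ r l = ((r : ℚ) + 1 - 2 * l) * monT κ (r + 1) l := by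
  induction l with
  | zero => simp [monT]
  | succ l ih =>
      simp only [monT, Finset.prod_range_succ] at *
      push_cast at ih ⊢
      linear_combination
        ((((r : ℚ) - 2 * l) * ((r : ℚ) - 2 * l - 1)) /
          ((2 * (l : ℚ) + 2) * (2 * (κ : ℚ) + 2 * l + 1))) * ih

lemma monT_succ (κ r l : ℕ) :
    monT κ (r + 1) (l + 1) = monT κ (r + 1) l *
      ((((r : ℚ) + 1 - 2 * l) * ((r : ℚ) - 2 * l)) /
        ((2 * (l : ℚ) + 2) * (2 * (κ : ℚ) + 2 * l + 1))) := by
  simp only [monT, Finset.prod_range_succ]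
  push_cast
  ring

lemma monT_step (κ r l : ℕ) (hκ : 1 ≤ κ) :
    monT κ (r + 1) l - (2 * ((r : ℚ) + κ) / ((r : ℚ) + 2 * κ)) * monT κ r l =
      (2 * (l : ℚ) * (2 * l + 2 * κ - 1) / (((r : ℚ) + 1) * ((r : ℚ) + 2 * κ))) *
          monT κ (r + 1) l -
        (2 * ((l : ℚ) + 1) * (2 * (l + 1 : ℚ) + 2 * κ - 1) /
            (((r : ℚ) + 1) * ((r : ℚ) + 2 * κ))) * monT κ (r + 1) (l + 1) := by
  have hk1 : (1 : ℚ) ≤ (κ : ℚ) := by exact_mod_cast hκ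
  have hr0 : (0 : ℚ) ≤ (r : ℚ) := by positivity
  have hr1 : ((r : ℚ) + 1) ≠ 0 := by positivity
  have hrk : ((r : ℚ) + 2 * κ) ≠ 0 := by nlinarith
  have hD1 : (2 * (l : ℚ) + 2) ≠ 0 := by positivity
  have hD2 : (2 * (κ : ℚ) + 2 * l + 1) ≠ 0 := by positivity
  have hy : monT κ r l = (((r : ℚ) + 1 - 2 * l) * monT κ (r + 1) l) / ((r : ℚ) + 1) := by
    rw [eq_div_iff hr1]
    linear_combination monT_rel κ r l
  rw [monT_succ, hy]
  field_simp
  ring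

lemma monT_sum_step (κ r : ℕ) (hκ : 1 ≤ κ) :
    ∑ l ∈ Finset.range (r + 2), monT κ (r + 1) l =
      (2 * ((r : ℚ) + κ) / ((r : ℚ) + 2 * κ)) * ∑ l ∈ Finset.range (r + 1), monT κ r l := by
  set g : ℕ → ℚ := fun l =>
    (2 * (l : ℚ) * (2 * l + 2 * κ - 1) / (((r : ℚ) + 1) * ((r : ℚ) + 2 * κ))) *
      monT κ (r + 1) l with hg
  have hzero : monT κ (r + 1) (r + 1) = 0 := monT_zero κ (r + 1) (r + 1) (by omega)
  have h1 : ∑ l ∈ Finset.range (r + 1),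
      (monT κ (r + 1) l - (2 * ((r : ℚ) + κ) / ((r : ℚ) + 2 * κ)) * monT κ r l) =
      g 0 - g (r + 1) := by
    rw [← Finset.sum_range_sub' g (r + 1)]
    exact Finset.sum_congr rfl fun l _ => by
      simpa [hg] using monT_step κ r l hκ
  have hg0 : g 0 = 0 := by simp [hg]
  have hgr : g (r + 1) = 0 := by simp [hg, hzero]
  rw [Finset.sum_sub_distrib, ← Finset.mul_sum, hg0, hgr] at h1
  rw [Finset.sum_range_succ, hzero, add_zero]
  linarith

lemma monS (κ : ℕ) (hκ : 1 ≤ κ) : ∀ r, 1 ≤ r →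
    ∑ l ∈ Finset.range (r + 1), monT κ r l =
      2 ^ r * ((r + κ - 1).choose r : ℚ) / ((r + 2 * κ - 1).choose r : ℚ) := by
  intro r hr
  induction r, hr using Nat.le_induction with
  | base =>
      have hk0 : (κ : ℚ) ≠ 0 := by exact_mod_cast Nat.one_le_iff_ne_zero.mp hκ
      have e1 : 1 + κ - 1 = κ := by omega
      have e2 : 1 + 2 * κ - 1 = 2 * κ := by omega
      rw [e1, e2]
      have hT1 : monT κ 1 1 = 0 := monT_zero κ 1 1 (by omega)
      rw [Finset.sum_range_succ, Finset.sum_range_one, hT1, add_zero]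
      have : monT κ 1 0 = 1 := by simp [monT]
      rw [this, Nat.choose_one_right, Nat.choose_one_right]
      push_cast
      field_simp
  | succ r hr ih =>
      have hk1 : (1 : ℚ) ≤ (κ : ℚ) := by exact_mod_cast hκ
      have hr0 : (0 : ℚ) ≤ (r : ℚ) := by positivity
      have hr1 : ((r : ℚ) + 1) ≠ 0 := by positivity
      have hrk : ((r : ℚ) + 2 * κ) ≠ 0 := by nlinarith
      rw [monT_sum_step κ r hκ, ih]
      have e1 : r + 1 + κ - 1 = r + κ := by omega
      have e2 : r + 1 + 2 * κ - 1 = r + 2 * κ := by omega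
      have e3 : r + κ - 1 + 1 = r + κ := by omega
      have e4 : r + 2 * κ - 1 + 1 = r + 2 * κ := by omega
      rw [e1, e2]
      have h1n := Nat.add_one_mul_choose_eq (r + κ - 1) r
      have h2n := Nat.add_one_mul_choose_eq (r + 2 * κ - 1) r
      rw [e3] at h1n
      rw [e4] at h2n
      have h1 : ((r : ℚ) + κ) * ((r + κ - 1).choose r : ℚ) =
          ((r + κ).choose (r + 1) : ℚ) * ((r : ℚ) + 1) := by exact_mod_cast h1n
      have h2 : ((r : ℚ) + 2 * κ) * ((r + 2 * κ - 1).choose r : ℚ) =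
          ((r + 2 * κ).choose (r + 1) : ℚ) * ((r : ℚ) + 1) := by exact_mod_cast h2n
      have hcb : ((r + 2 * κ - 1).choose r : ℚ) ≠ 0 := by
        exact Nat.cast_ne_zero.2 (Nat.choose_pos (by omega)).ne'
      have hcb1 : ((r + 2 * κ).choose (r + 1) : ℚ) ≠ 0 := by
        exact Nat.cast_ne_zero.2 (Nat.choose_pos (by omega)).ne'
      have ea : ((r + κ).choose (r + 1) : ℚ) =
          ((r : ℚ) + κ) * ((r + κ - 1).choose r : ℚ) / ((r : ℚ) + 1) := by
        rw [eq_div_iff hr1]; linear_combination h1.symm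
      have eb : ((r + 2 * κ).choose (r + 1) : ℚ) =
          ((r : ℚ) + 2 * κ) * ((r + 2 * κ - 1).choose r : ℚ) / ((r : ℚ) + 1) := by
        rw [eq_div_iff hr1]; linear_combination h2.symm
      rw [ea, eb]
      field_simp
      ring

/-- For positive integers `r, κ`:
`∑_{l=0}^{⌊r/2⌋} ∏_{j=0}^{l-1} (r-2j)(r-2j-1) / ((2j+2)(2κ+2j+1))
  = 2^r · C(r+κ-1, r) / C(r+2κ-1, r)`. -/
theorem monster_identity_one (r κ : ℕ) (hr : 1 ≤ r) (hκ : 1 ≤ κ) :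
    ∑ l ∈ Finset.range (r / 2 + 1), ∏ j ∈ Finset.range l,
        (((r : ℚ) - 2 * j) * ((r : ℚ) - 2 * j - 1)) /
          ((2 * (j : ℚ) + 2) * (2 * (κ : ℚ) + 2 * j + 1)) =
      2 ^ r * ((r + κ - 1).choose r : ℚ) / ((r + 2 * κ - 1).choose r : ℚ) := by
  have hext : ∑ l ∈ Finset.range (r / 2 + 1), monT κ r l =
      ∑ l ∈ Finset.range (r + 1), monT κ r l := by
    apply Finset.sum_subset (Finset.range_subset_range.2 (by omega))
    intro x hx hnx
    exact monT_zero κ r x (by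
      simp only [Finset.mem_range] at hx hnx
      omega)
  calc ∑ l ∈ Finset.range (r / 2 + 1), ∏ j ∈ Finset.range l,
        (((r : ℚ) - 2 * j) * ((r : ℚ) - 2 * j - 1)) /
          ((2 * (j : ℚ) + 2) * (2 * (κ : ℚ) + 2 * j + 1))
      = ∑ l ∈ Finset.range (r / 2 + 1), monT κ r l := rfl
    _ = ∑ l ∈ Finset.range (r + 1), monT κ r l := hext
    _ = 2 ^ r * ((r + κ - 1).choose r : ℚ) / ((r + 2 * κ - 1).choose r : ℚ) := monS κ hκ r hr
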